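/- Let G be a finite simple graph and S ⊆ V(G) an independent set, G^S its S-suspension with new vertex x_0, and J = (x_0 x_i : x_i ∉ S). Then for every k ≥ 1, I(G)^k ∩ J·I(G^S)^{k-1} = x_0 · I(G)^k. -/

import Mathlib

open MvPolynomial

/-- The `S`-suspension of `G`: add a new vertex (`none`) joined to every vertex of
`V(G) \ S`. -/
def suspension {V : Type*} (G : SimpleGraph V) (S : Set V) : SimpleGraph (Option V) :=
  SimpleGraph.fromRel (fun a b =>
    match a, b with
    | some x, some y => G.Adj x y
    | some x, none => x ∉ S
    | _, _ => False)

/-- The edge ideal of a graph `G` in `K[x_v : v ∈ V]`. -/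
noncomputable def edgeIdeal {V K : Type*} [Field K] (G : SimpleGraph V) : Ideal (MvPolynomial V K) :=
  Ideal.span {p | ∃ i j : V, G.Adj i j ∧ p = X i * X j}

/-- In `R[X]`, if `X * p` lies in the extension of `I`, so does `p`. -/
lemma aux_X_mul_mem {R : Type*} [CommRing R] {I : Ideal R} {p : Polynomial R}
    (h : Polynomial.X * p ∈ I.map (Polynomial.C : R →+* Polynomial R)) :
    p ∈ I.map (Polynomial.C : R →+* Polynomial R) := by
  rw [Ideal.mem_map_C_iff] at h ⊢
  intro n
  simpa using h (n + 1)

/-- The composite of `rename some` with `optionEquivLeft` is `Polynomial.C`. -/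
lemma aux_comp_eq {V K : Type*} [Field K] :
    ((MvPolynomial.optionEquivLeft K V : MvPolynomial (Option V) K ≃+* Polynomial (MvPolynomial V K)) :
      MvPolynomial (Option V) K →+* Polynomial (MvPolynomial V K)).comp
      (MvPolynomial.rename (some : V → Option V)).toRingHom
      = (Polynomial.C : MvPolynomial V K →+* Polynomial (MvPolynomial V K)) := by
  apply MvPolynomial.ringHom_ext
  · intro r
    simp [MvPolynomial.optionEquivLeft_C]
  · intro i
    simp [MvPolynomial.optionEquivLeft_X_some]

/-- Key lemma: `X none` is regular modulo an extended ideal. -/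
lemma aux_key {V K : Type*} [Field K] (I : Ideal (MvPolynomial V K))
    (g : MvPolynomial (Option V) K)
    (h : X (none : Option V) * g ∈ I.map (MvPolynomial.rename (some : V → Option V)).toRingHom) :
    g ∈ I.map (MvPolynomial.rename (some : V → Option V)).toRingHom := by
  set e := (MvPolynomial.optionEquivLeft K V :
      MvPolynomial (Option V) K ≃+* Polynomial (MvPolynomial V K)) with he
  have hmap : (I.map (MvPolynomial.rename (some : V → Option V)).toRingHom).map (e : MvPolynomial (Option V) K →+* _)
      = I.map (Polynomial.C : MvPolynomial V K →+* Polynomial (MvPolynomial V K)) := by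
    rw [Ideal.map_map, aux_comp_eq]
  have h2 : e (X (none : Option V) * g) ∈ I.map (Polynomial.C : MvPolynomial V K →+* _) := by
    rw [← hmap]
    exact Ideal.mem_map_of_mem _ h
  have h3 : Polynomial.X * e g ∈ I.map (Polynomial.C : MvPolynomial V K →+* _) := by
    have : e (X (none : Option V) * g) = Polynomial.X * e g := by
      rw [map_mul]
      congr 1
      exact MvPolynomial.optionEquivLeft_X_none K V
    rwa [this] at h2
  have h4 : e g ∈ Ideal.map (Polynomial.C : MvPolynomial V K →+* _) I := aux_X_mul_mem h3
  -- pull back along e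
  have hcomap : Ideal.comap (e : MvPolynomial (Option V) K →+* _)
      (Ideal.map (Polynomial.C : MvPolynomial V K →+* _) I)
      = I.map (MvPolynomial.rename (some : V → Option V)).toRingHom := by
    rw [← hmap]
    exact Ideal.comap_map_of_bijective _ e.bijective
  rw [← hcomap]
  exact Ideal.mem_comap.mpr h4

theorem inf_pow_suspension_eq {V K : Type*} [Field K]
    (G : SimpleGraph V) (S : Set V) (hS : ∀ x ∈ S, ∀ y ∈ S, ¬ G.Adj x y) (k : ℕ)
    (hk : 1 ≤ k) :
    -- `IG` is the edge ideal of `G` viewed in the ring of `G^S`, `J = (x₀ xᵢ : xᵢ ∉ S)`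
    ∀ IG J : Ideal (MvPolynomial (Option V) K),
      IG = Ideal.span {p | ∃ i j : V, G.Adj i j ∧ p = X (some i) * X (some j)} →
      J = Ideal.span {p | ∃ i : V, i ∉ S ∧ p = X (none : Option V) * X (some i)} →
      IG ^ k ⊓ (J * (edgeIdeal (suspension G S) (K := K)) ^ (k - 1))
        = Ideal.span {(X (none : Option V) : MvPolynomial (Option V) K)} * IG ^ k := by
  intro IG J hIG hJ
  set x0 : MvPolynomial (Option V) K := X (none : Option V) with hx0
  set φ : MvPolynomial V K →+* MvPolynomial (Option V) K :=
    (MvPolynomial.rename (some : V → Option V)).toRingHom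
    with hφ
  -- IG is the extension of edgeIdeal G
  have hIGmap : IG = (edgeIdeal (K := K) G).map φ := by
    rw [hIG, edgeIdeal, Ideal.map_span]
    congr 1
    ext p
    constructor
    · rintro ⟨i, j, hij, rfl⟩
      exact ⟨X i * X j, ⟨i, j, hij, rfl⟩, by simp [hφ]⟩
    · rintro ⟨q, ⟨i, j, hij, rfl⟩, rfl⟩
      exact ⟨i, j, hij, by simp [hφ]⟩
  -- IG ≤ edge ideal of suspension
  have hIGle : IG ≤ edgeIdeal (suspension G S) (K := K) := by
    rw [hIG, edgeIdeal]
    apply Ideal.span_mono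
    rintro p ⟨i, j, hij, rfl⟩
    refine ⟨some i, some j, ?_, rfl⟩
    simp only [suspension, SimpleGraph.fromRel_adj]
    exact ⟨by simpa using hij.ne, Or.inl hij⟩
  -- J ≤ (x0)
  have hJle : J ≤ Ideal.span {x0} := by
    rw [hJ, Ideal.span_le]
    rintro p ⟨i, hi, rfl⟩
    exact Ideal.mem_span_singleton.2 ⟨X (some i), rfl⟩
  -- x0 * IG ⊆ J
  have hx0IG : ∀ s ∈ IG, x0 * s ∈ J := by
    intro s hs
    rw [hIG] at hs
    induction hs using Submodule.span_induction with
    | mem p hp =>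
      obtain ⟨i, j, hij, rfl⟩ := hp
      rcases (by by_contra h; push_neg at h; exact hS i h.1 j h.2 hij :
          i ∉ S ∨ j ∉ S) with hi | hj
      · have : x0 * X (some i) ∈ J := by
          rw [hJ]; exact Ideal.subset_span ⟨i, hi, rfl⟩
        have := Ideal.mul_mem_right (X (some j)) _ this
        convert this using 1; ring
      · have : x0 * X (some j) ∈ J := by
          rw [hJ]; exact Ideal.subset_span ⟨j, hj, rfl⟩
        have := Ideal.mul_mem_right (X (some i)) _ this
        convert this using 1; ring
    | zero => simp
    | add a b _ _ ha hb => rw [mul_add]; exact J.add_mem ha hb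
    | smul c a _ ha =>
      rw [smul_eq_mul, show x0 * (c * a) = c * (x0 * a) by ring]
      exact J.mul_mem_left c ha
  apply le_antisymm
  · -- hard inclusion
    rintro f ⟨hf1, hf2⟩
    have hfx0 : f ∈ Ideal.span {x0} := by
      have : J * (edgeIdeal (suspension G S) (K := K)) ^ (k-1) ≤ Ideal.span {x0} :=
        le_trans Ideal.mul_le_left hJle
      exact this hf2
    obtain ⟨g, rfl⟩ := Ideal.mem_span_singleton.1 hfx0
    -- hf1 : x0 * g ∈ IG ^ k
    rw [hIGmap, ← Ideal.map_pow] at hf1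
    have hg : g ∈ (edgeIdeal (K := K) G ^ k).map φ := aux_key _ _ hf1
    rw [Ideal.map_pow, ← hIGmap] at hg
    exact Ideal.mul_mem_mul (Ideal.mem_span_singleton_self x0) hg
  · -- easy inclusion
    rw [Ideal.mul_le]
    intro r hr s hs
    obtain ⟨a, rfl⟩ := Ideal.mem_span_singleton.1 hr
    refine ⟨Ideal.mul_mem_left _ _ hs, ?_⟩
    -- need x0 * a * s ∈ J * IS^{k-1}
    obtain ⟨k', rfl⟩ : ∃ k', k = k' + 1 := ⟨k - 1, by omega⟩
    rw [pow_succ'] at hs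
    -- hs : s ∈ IG * IG ^ k'
    rw [show x0 * a * s = a * (x0 * s) by ring]
    refine Ideal.mul_mem_left _ _ ?_
    have hmain : ∀ s ∈ IG * IG ^ k',
        x0 * s ∈ J * (edgeIdeal (suspension G S) (K := K)) ^ (k' + 1 - 1) := by
      intro s hs
      simp only [Nat.add_sub_cancel]
      refine Submodule.smul_induction_on hs ?_ ?_
      · intro r hr t ht
        rw [smul_eq_mul, show x0 * (r * t) = (x0 * r) * t by ring]
        exact Ideal.mul_mem_mul (hx0IG r hr) (Ideal.pow_right_mono hIGle k' ht)
      · intro a b ha hb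
        rw [mul_add]
        exact Ideal.add_mem _ ha hb
    exact hmain s hs
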